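/- Let Σ be a finite relational signature, K a finite set of constants, G a finite nonempty tabloid over Σ and K, and T the undirected unraveling of G from any node. Then the structure 𝔄(T) is guarded bisimilar to some finite Σ-structure. -/

import Mathlib

open FirstOrder

namespace GFPaper

variable {L : FirstOrder.Language} {M N : Type*} {K V : Type*}

/-! ### Guarded sets, guarded tuples, partial isomorphisms, guarded bisimulations -/

/-- A guarded set of a `Σ`-structure is a nonempty (finite) subset contained in the set of
components of some tuple belonging to some relation of the structure. -/
def IsGuardedSet (SM : L.Structure M) (B : Set M) : Prop :=
  B.Nonempty ∧ ∃ (n : ℕ) (R : L.Relations n) (a : Fin n → M),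
    SM.RelMap R a ∧ B ⊆ Set.range a

/-- A guarded tuple is a tuple of pairwise distinct elements whose set of components is
a guarded set. -/
def IsGuardedTuple (SM : L.Structure M) {k : ℕ} (a : Fin k → M) : Prop :=
  Function.Injective a ∧ IsGuardedSet SM (Set.range a)

/-- A partial isomorphism between two `Σ`-structures: an injective map between finite subsets
preserving and reflecting all atomic relations.  The function `toFun` is total, but only its
restriction to `dom` is meaningful. -/
structure PartialIso (SM : L.Structure M) (SN : L.Structure N) where
  dom : Set M
  finite_dom : dom.Finite
  toFun : M → N
  injOn : Set.InjOn toFun dom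
  rel_iff : ∀ {n : ℕ} (R : L.Relations n) (a : Fin n → M), (∀ i, a i ∈ dom) →
    (SM.RelMap R a ↔ SN.RelMap R (fun i => toFun (a i)))

/-- The range of a partial isomorphism. -/
def PartialIso.rng {SM : L.Structure M} {SN : L.Structure N} (α : PartialIso SM SN) : Set N :=
  α.toFun '' α.dom

/-- A guarded bisimulation between two `Σ`-structures: a nonempty family of partial
isomorphisms between finite subsets satisfying the back-and-forth conditions over guarded
sets. -/
structure GuardedBisim (SM : L.Structure M) (SN : L.Structure N) where
  Z : Set (PartialIso SM SN)
  nonempty : Z.Nonempty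
  forth : ∀ α ∈ Z, ∀ B₀ : Set M, IsGuardedSet SM B₀ →
    ∃ γ ∈ Z, B₀ ⊆ γ.dom ∧ ∀ x ∈ α.dom ∩ γ.dom, α.toFun x = γ.toFun x
  back : ∀ α ∈ Z, ∀ B₁ : Set N, IsGuardedSet SN B₁ →
    ∃ γ ∈ Z, B₁ ⊆ γ.rng ∧ ∀ x ∈ α.dom, ∀ y ∈ γ.dom, α.toFun x = γ.toFun y → x = y

/-- `𝔄₀,ā ∼_g 𝔄₁,b̄` : some guarded bisimulation contains the map `ā ↦ b̄`. -/
def GBisimTuple (SM : L.Structure M) (SN : L.Structure N) {k : ℕ}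
    (a : Fin k → M) (b : Fin k → N) : Prop :=
  ∃ (Z : GuardedBisim SM SN) (α : PartialIso SM SN), α ∈ Z.Z ∧
    α.dom = Set.range a ∧ ∀ i, α.toFun (a i) = b i

/-- Guarded bisimilarity has finite index on the guarded tuples of a structure:
there is a finite set of guarded tuples such that every guarded tuple is guarded bisimilar
to one of them. -/
def FiniteGBisimIndex (SM : L.Structure M) : Prop :=
  ∃ S : Set (Σ k : ℕ, Fin k → M), S.Finite ∧
    ∀ ⦃k : ℕ⦄ (a : Fin k → M), IsGuardedTuple SM a →
      ∃ b : Fin k → M, (⟨k, b⟩ : Σ k : ℕ, Fin k → M) ∈ S ∧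
        IsGuardedTuple SM b ∧ GBisimTuple SM SM a b

/-! ### Undirected unraveling and undirected bisimulation -/

/-- `t` extends `s` by one edge (i.e. `s` is obtained from `t` by deleting its last node). -/
def ExtendsBy (G : SimpleGraph V) (v₀ : V) (s t : Σ u : V, G.Walk v₀ u) : Prop :=
  ∃ h : G.Adj s.1 t.1, t.2 = s.2.concat h

/-- The undirected unraveling of a graph `G` from a node `v₀`: nodes are the finite walks
of `G` starting at `v₀`, and edges join each walk of positive length to the walk obtained
by deleting its last node. -/
def unraveling (G : SimpleGraph V) (v₀ : V) : SimpleGraph (Σ u : V, G.Walk v₀ u) where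
  Adj s t := ExtendsBy G v₀ s t ∨ ExtendsBy G v₀ t s
  symm := ⟨fun _ _ h => Or.symm h⟩
  loopless := ⟨fun s h => by
    rcases h with ⟨h, _⟩ | ⟨h, _⟩ <;> exact G.loopless.irrefl s.1 h⟩

/-- The projection sending a node of the unraveling (a walk) to its terminal node. -/
def unravelingProj (G : SimpleGraph V) (v₀ : V) : (Σ u : V, G.Walk v₀ u) → V :=
  fun s => s.1

/-- An undirected bisimulation between node-labelled undirected graphs. -/
def IsUndirectedBisim {V₀ V₁ Λ : Type*} (G₀ : SimpleGraph V₀) (G₁ : SimpleGraph V₁)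
    (ℓ₀ : V₀ → Λ) (ℓ₁ : V₁ → Λ) (Z : Set (V₀ × V₁)) : Prop :=
  ∀ p ∈ Z, ℓ₀ p.1 = ℓ₁ p.2 ∧
    (∀ w₀, G₀.Adj p.1 w₀ → ∃ w₁, G₁.Adj p.2 w₁ ∧ (w₀, w₁) ∈ Z) ∧
    (∀ w₁, G₁.Adj p.2 w₁ → ∃ w₀, G₀.Adj p.1 w₀ ∧ (w₀, w₁) ∈ Z)

/-! ### Tabloids -/

/-- A tabloid over a relational signature `L` and a set `K` of constant names: an undirected
graph where every node `v` carries a set `consts v ⊆ K` of constants and an atomic type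
over `consts v`, encoded as the collection `rel v` of atomic facts over `consts v`; the
types of adjacent nodes agree over their common constants. -/
structure Tabloid (L : FirstOrder.Language) (K : Type*) (V : Type*) where
  graph : SimpleGraph V
  consts : V → Set K
  rel : ∀ (_v : V) {n : ℕ}, L.Relations n → (Fin n → K) → Prop
  rel_mem : ∀ (v : V) {n : ℕ} (R : L.Relations n) (c : Fin n → K),
    rel v R c → ∀ i, c i ∈ consts v
  compat : ∀ (v w : V), graph.Adj v w → ∀ {n : ℕ} (R : L.Relations n) (c : Fin n → K),
    (∀ i, c i ∈ consts v ∩ consts w) → (rel v R c ↔ rel w R c)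

namespace Tabloid

variable (T : Tabloid L K V)

/-- The pairs `(v, c)` with `v` a node and `c` one of its constants. -/
def Pairs : Type _ := {q : V × K // q.2 ∈ T.consts q.1}

/-- The relation `(v,c) ≈ (v',c')` iff `c = c'` and `c` belongs to the constants of every
node on the (unique, when the tabloid is a tree) path connecting `v` and `v'`. -/
def keq (p q : T.Pairs) : Prop :=
  p.1.2 = q.1.2 ∧
    ∀ w : T.graph.Walk p.1.1 q.1.1, w.IsPath → ∀ z ∈ w.support, p.1.2 ∈ T.consts z

/-- The set of nodes `v` witnessing simultaneously the classes `[v_i, c_i]`, i.e. such that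
`c_i ∈ K_v` and `[v, c_i] = [v_i, c_i]` for all `i`. -/
def classSet {n : ℕ} (p : Fin n → T.Pairs) : Set V :=
  {v | ∀ i, ∃ h : (p i).1.2 ∈ T.consts v,
    Quot.mk T.keq ⟨((v, (p i).1.2) : V × K), h⟩ = Quot.mk T.keq (p i)}

/-- The structure `𝔄(T)` associated to a (tree) tabloid: the universe is the set of
`≈`-classes `[v,c]`, and a tuple satisfies a relation iff some single node witnesses all
classes and its atomic type contains the corresponding fact. -/
def AT [L.IsRelational] : L.Structure (Quot T.keq) where
  funMap := fun f _ => isEmptyElim f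
  RelMap := fun {n} R x =>
    ∃ (v : V) (c : Fin n → K) (h : ∀ i, c i ∈ T.consts v),
      (∀ i, Quot.mk T.keq ⟨((v, c i) : V × K), h i⟩ = x i) ∧ T.rel v R c

/-- The undirected unraveling of a tabloid from a node: the unraveling of the underlying
graph, each walk carrying the labels of its terminal node. -/
def unravel (v₀ : V) : Tabloid L K (Σ u : V, T.graph.Walk v₀ u) where
  graph := unraveling T.graph v₀
  consts := fun s => T.consts s.1
  rel := fun s => T.rel s.1
  rel_mem := fun s _ R c h i => T.rel_mem s.1 R c h i
  compat := by
    rintro s t (⟨h, _⟩ | ⟨h, _⟩) n R c hc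
    · exact T.compat s.1 t.1 h R c hc
    · exact (T.compat t.1 s.1 h R c (fun i => ⟨(hc i).2, (hc i).1⟩)).symm

/-- An isomorphism of a tabloid onto itself: a graph automorphism preserving both labels. -/
structure Auto where
  toEquiv : V ≃ V
  adj_iff : ∀ z z', T.graph.Adj z z' ↔ T.graph.Adj (toEquiv z) (toEquiv z')
  consts_eq : ∀ z, T.consts (toEquiv z) = T.consts z
  rel_iff : ∀ (z : V) {n : ℕ} (R : L.Relations n) (c : Fin n → K),
    T.rel (toEquiv z) R c ↔ T.rel z R c

end Tabloid

/-! ### The tabloid built from a finite model -/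

/-- `χ` is the graph of a function. -/
def IsFunGraph (χ : Set (M × K)) : Prop :=
  ∀ ⦃a b b'⦄, (a, b) ∈ χ → (a, b') ∈ χ → b = b'

/-- `χ` is the graph of an injective (partial) function. -/
def IsInjGraph (χ : Set (M × K)) : Prop :=
  ∀ ⦃a a' b⦄, (a, b) ∈ χ → (a', b) ∈ χ → a = a'

/-- The vertices of the tabloid built from a structure: injections `χ : A → K` with `A`
a guarded set, encoded via their graphs. -/
def ChiVertex (SM : L.Structure M) (K : Type*) : Type _ :=
  {χ : Set (M × K) // IsFunGraph χ ∧ IsInjGraph χ ∧ IsGuardedSet SM {a | ∃ b, (a, b) ∈ χ}}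

/-- The constants of the vertex `χ`: the range of `χ`. -/
def chiConsts {SM : L.Structure M} (χ : ChiVertex SM K) : Set K :=
  {b | ∃ a, (a, b) ∈ χ.1}

/-- The atomic type of the vertex `χ`: the image under `χ` of the atomic type of its
domain in the structure. -/
def chiRel {SM : L.Structure M} (χ : ChiVertex SM K) {n : ℕ}
    (R : L.Relations n) (c : Fin n → K) : Prop :=
  ∃ a : Fin n → M, (∀ i, (a i, c i) ∈ χ.1) ∧ SM.RelMap R a

/-- Adjacency of vertices: `χ ∪ χ'` is an injective function (and `χ ≠ χ'`). -/
def chiAdj {SM : L.Structure M} (χ χ' : ChiVertex SM K) : Prop :=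
  χ ≠ χ' ∧ IsFunGraph (χ.1 ∪ χ'.1) ∧ IsInjGraph (χ.1 ∪ χ'.1)

/-! ### The guarded fragment of first-order logic -/

/-- Formulas of the guarded fragment of first-order logic over a relational signature `L`,
with variables drawn from `ℕ`: atomic formulas (including equalities), Boolean connectives,
and guarded quantification `∃ȳ (R(x̄ȳ) ∧ φ)` and `∀ȳ (R(x̄ȳ) → φ)`. -/
inductive GFormula (L : FirstOrder.Language) : Type _ where
  | equal : ℕ → ℕ → GFormula L
  | rel : ∀ {n : ℕ}, L.Relations n → (Fin n → ℕ) → GFormula L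
  | not : GFormula L → GFormula L
  | and : GFormula L → GFormula L → GFormula L
  | or : GFormula L → GFormula L → GFormula L
  | exGuard : ∀ {n : ℕ}, L.Relations n → (Fin n → ℕ) → Set ℕ → GFormula L → GFormula L
  | allGuard : ∀ {n : ℕ}, L.Relations n → (Fin n → ℕ) → Set ℕ → GFormula L → GFormula L

namespace GFormula

/-- The free variables of a formula. -/
def free : GFormula L → Set ℕ
  | equal i j => {i, j}
  | rel _ ts => Set.range ts
  | not φ => φ.free
  | and φ ψ => φ.free ∪ ψ.free
  | or φ ψ => φ.free ∪ ψ.free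
  | exGuard _ ts ys φ => (Set.range ts ∪ φ.free) \ ys
  | allGuard _ ts ys φ => (Set.range ts ∪ φ.free) \ ys

/-- Well-formedness for the guarded fragment: in every guarded quantification
`∃ȳ (R(x̄ȳ) ∧ φ)` resp. `∀ȳ (R(x̄ȳ) → φ)` the guard atom contains all free variables
of `φ` as well as all quantified variables. -/
def IsGF : GFormula L → Prop
  | equal _ _ => True
  | rel _ _ => True
  | not φ => φ.IsGF
  | and φ ψ => φ.IsGF ∧ ψ.IsGF
  | or φ ψ => φ.IsGF ∧ ψ.IsGF
  | exGuard _ ts ys φ => φ.free ⊆ Set.range ts ∧ ys ⊆ Set.range ts ∧ φ.IsGF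
  | allGuard _ ts ys φ => φ.free ⊆ Set.range ts ∧ ys ⊆ Set.range ts ∧ φ.IsGF

/-- Satisfaction of a guarded formula in a structure under a variable assignment. -/
def Sat (SM : L.Structure M) : GFormula L → (ℕ → M) → Prop
  | equal i j, β => β i = β j
  | rel R ts, β => SM.RelMap R (fun i => β (ts i))
  | not φ, β => ¬ Sat SM φ β
  | and φ ψ, β => Sat SM φ β ∧ Sat SM ψ β
  | or φ ψ, β => Sat SM φ β ∨ Sat SM ψ β
  | exGuard R ts ys φ, β => ∃ β' : ℕ → M, (∀ x ∉ ys, β' x = β x) ∧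
      SM.RelMap R (fun i => β' (ts i)) ∧ Sat SM φ β'
  | allGuard R ts ys φ, β => ∀ β' : ℕ → M, (∀ x ∉ ys, β' x = β x) →
      SM.RelMap R (fun i => β' (ts i)) → Sat SM φ β'

/-- Every subformula of `φ` has at most `n` free variables. -/
def WidthLE (n : ℕ) : GFormula L → Prop
  | equal i j => (({i, j} : Set ℕ)).ncard ≤ n
  | rel _ ts => (Set.range ts).ncard ≤ n
  | not φ => φ.WidthLE n
  | and φ ψ => (φ.free ∪ ψ.free).ncard ≤ n ∧ φ.WidthLE n ∧ ψ.WidthLE n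
  | or φ ψ => (φ.free ∪ ψ.free).ncard ≤ n ∧ φ.WidthLE n ∧ ψ.WidthLE n
  | exGuard _ ts _ φ => (Set.range ts ∪ φ.free).ncard ≤ n ∧ φ.WidthLE n
  | allGuard _ ts _ φ => (Set.range ts ∪ φ.free).ncard ≤ n ∧ φ.WidthLE n

end GFormula



/-! ### Auxiliary development for Statement 12 -/

namespace S12

open SimpleGraph

noncomputable section

open scoped Classical

variable {L : FirstOrder.Language} {K V : Type*} {G : Tabloid L K V} {v₀ : V}

/-- Nodes of the unraveling. -/
abbrev TNode (G : Tabloid L K V) (v₀ : V) : Type _ := Σ u : V, G.graph.Walk v₀ u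

/-- The unraveling graph. -/
abbrev UG (G : Tabloid L K V) (v₀ : V) : SimpleGraph (TNode G v₀) := unraveling G.graph v₀

lemma extendsBy_length {s t : TNode G v₀} (h : ExtendsBy G.graph v₀ s t) :
    t.2.length = s.2.length + 1 := by
  obtain ⟨a, e⟩ := h; rw [e, Walk.length_concat]

lemma extends_unique {a b c : TNode G v₀} (h1 : ExtendsBy G.graph v₀ a c)
    (h2 : ExtendsBy G.graph v₀ b c) : a = b := by
  obtain ⟨ha, e1⟩ := h1
  obtain ⟨hb, e2⟩ := h2
  obtain ⟨a1, a2⟩ := a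
  obtain ⟨b1, b2⟩ := b
  obtain ⟨hv, hcopy⟩ := Walk.concat_inj (e1.symm.trans e2)
  dsimp at hv
  subst hv
  rw [Walk.copy_rfl_rfl] at hcopy
  subst hcopy
  rfl

/-- The root of the unraveling. -/
def rootNode (G : Tabloid L K V) (v₀ : V) : TNode G v₀ := ⟨v₀, Walk.nil⟩

private def walkAux {a b : V} (p : G.graph.Walk a b) :
    ∀ (h : a = v₀), (UG G v₀).Walk (rootNode G v₀) ⟨b, p.copy h rfl⟩ := by
  induction p using Walk.concatRec with
  | Hnil =>
    intro h
    subst h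
    rw [Walk.copy_rfl_rfl]
    exact Walk.nil
  | Hconcat p hadj ih =>
    intro h
    subst h
    refine (ih rfl).concat ?_
    rw [Walk.copy_rfl_rfl]
    exact Or.inl ⟨hadj, by rw [Walk.copy_rfl_rfl]⟩

/-- The unraveling is connected to the root. -/
def walkFromRoot (s : TNode G v₀) : (UG G v₀).Walk (rootNode G v₀) s := by
  have h := walkAux (G := G) (v₀ := v₀) s.2 rfl
  rwa [Walk.copy_rfl_rfl, Sigma.eta] at h

lemma concat_isPath_parts {α : Type*} {Gr : SimpleGraph α} {a b c : α} (p : Gr.Walk a b)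
    (h : Gr.Adj b c) (hp : (p.concat h).IsPath) : p.IsPath ∧ c ∉ p.support := by
  have h1 := hp.reverse
  rw [Walk.reverse_concat, Walk.cons_isPath_iff] at h1
  obtain ⟨h2, h3⟩ := h1
  constructor
  · have := h2.reverse; rwa [Walk.reverse_reverse] at this
  · rw [Walk.support_reverse] at h3; simpa using h3

lemma exists_concat_of_ne {s t : TNode G v₀} (hne : s ≠ t) (P : (UG G v₀).Walk s t) :
    ∃ (y : TNode G v₀) (P₀ : (UG G v₀).Walk s y) (h : (UG G v₀).Adj y t),
      P = P₀.concat h := by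
  obtain ⟨w, h, p', he⟩ := Walk.exists_eq_cons_of_ne (Ne.symm hne) P.reverse
  refine ⟨w, p'.reverse, h.symm, ?_⟩
  have : P = (Walk.cons h p').reverse := by rw [← he, Walk.reverse_reverse]
  rwa [Walk.reverse_cons] at this

lemma last_step_parent : ∀ (n : ℕ) {s t : TNode G v₀} (P : (UG G v₀).Walk s t),
    P.length ≤ n → P.IsPath → s.2.length ≤ t.2.length → s ≠ t →
    ∃ (y : TNode G v₀) (P₀ : (UG G v₀).Walk s y) (h : (UG G v₀).Adj y t),
      P = P₀.concat h ∧ ExtendsBy G.graph v₀ y t := by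
  intro n
  induction n with
  | zero =>
    intro s t P hlen _ _ hne
    obtain ⟨y, P₀, h, rfl⟩ := exists_concat_of_ne hne P
    rw [Walk.length_concat] at hlen
    omega
  | succ n ih =>
    intro s t P hlen hP hd hne
    obtain ⟨y, P₀, hadj, rfl⟩ := exists_concat_of_ne hne P
    rcases hadj with hext | hext
    · exact ⟨y, P₀, Or.inl hext, rfl, hext⟩
    · -- bad case : ExtendsBy t y, so y is deeper
      exfalso
      have hty : t.2.length + 1 = y.2.length := (extendsBy_length hext).symm
      have hparts := concat_isPath_parts P₀ (Or.inr hext) hP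
      have hsy : s ≠ y := by
        intro h
        subst h
        omega
      have hlen' : P₀.length ≤ n := by
        have h2 := (Walk.length_concat P₀ (Or.inr hext)).symm.trans_le hlen; omega
      obtain ⟨z, P₁, hadj', heq, hzext⟩ :=
        ih P₀ hlen' hparts.1 (by omega) hsy
      have hzt : z = t := extends_unique hzext hext
      subst hzt
      apply hparts.2
      rw [heq, Walk.support_concat]
      exact List.mem_append_left _ (Walk.end_mem_support P₁)

lemma path_unique {s t : TNode G v₀} (P Q : (UG G v₀).Walk s t)
    (hP : P.IsPath) (hQ : Q.IsPath) : P = Q := by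
  suffices H : ∀ (D : ℕ) {s t : TNode G v₀} (P Q : (UG G v₀).Walk s t),
      s.2.length + t.2.length ≤ D → P.IsPath → Q.IsPath → P = Q from
    H (s.2.length + t.2.length) P Q le_rfl hP hQ
  intro D
  induction D using Nat.strong_induction_on with
  | _ D ih =>
    intro s t P Q hD hP hQ
    by_cases hst : s = t
    · subst hst
      rw [(Walk.isPath_iff_eq_nil (p := P)).mp hP, (Walk.isPath_iff_eq_nil (p := Q)).mp hQ]
    rcases le_total s.2.length t.2.length with hle | hle
    · obtain ⟨y, P₀, hadj, rfl, hyext⟩ := last_step_parent P.length P le_rfl hP hle hst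
      obtain ⟨y', Q₀, hadj', hQeq, hy'ext⟩ := last_step_parent Q.length Q le_rfl hQ hle hst
      obtain rfl : y = y' := extends_unique hyext hy'ext
      have hylen : t.2.length = y.2.length + 1 := extendsBy_length hyext
      have hmeas : s.2.length + y.2.length < D := by omega
      have hP₀ := (concat_isPath_parts P₀ hadj hP).1
      have hQ₀ : Q₀.IsPath := by
        have := hQ; rw [hQeq] at this
        exact (concat_isPath_parts Q₀ hadj' this).1
      have := ih _ hmeas P₀ Q₀ le_rfl hP₀ hQ₀
      subst this
      rw [hQeq]
    · have h1 : P.reverse = Q.reverse := by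
        obtain ⟨y, P₀, hadj, hPeq, hyext⟩ :=
          last_step_parent P.reverse.length P.reverse le_rfl hP.reverse hle (Ne.symm hst)
        obtain ⟨y', Q₀, hadj', hQeq, hy'ext⟩ :=
          last_step_parent Q.reverse.length Q.reverse le_rfl hQ.reverse hle (Ne.symm hst)
        obtain rfl : y = y' := extends_unique hyext hy'ext
        have hylen : s.2.length = y.2.length + 1 := extendsBy_length hyext
        have hmeas : t.2.length + y.2.length < D := by omega
        have hP₀ : P₀.IsPath := by
          have := hP.reverse; rw [hPeq] at this
          exact (concat_isPath_parts P₀ hadj this).1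
        have hQ₀ : Q₀.IsPath := by
          have := hQ.reverse; rw [hQeq] at this
          exact (concat_isPath_parts Q₀ hadj' this).1
        have := ih _ hmeas P₀ Q₀ le_rfl hP₀ hQ₀
        subst this
        rw [hPeq, hQeq]
      have := congrArg Walk.reverse h1
      rwa [Walk.reverse_reverse, Walk.reverse_reverse] at this

/-- The canonical path between two nodes of the unraveling. -/
def canonPath (s t : TNode G v₀) : (UG G v₀).Walk s t :=
  ((walkFromRoot s).reverse.append (walkFromRoot t)).bypass

lemma canonPath_isPath (s t : TNode G v₀) : (canonPath s t).IsPath :=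
  Walk.bypass_isPath _

lemma eq_canonPath {s t : TNode G v₀} (P : (UG G v₀).Walk s t) (hP : P.IsPath) :
    P = canonPath s t :=
  path_unique P (canonPath s t) hP (canonPath_isPath s t)

/-! ### The equivalence relation on pairs -/

/-- Constructor for elements of `𝔄(T)`. -/
def mkT (z : TNode G v₀) (c : K) (hc : c ∈ G.consts z.1) :
    Quot (G.unravel v₀).keq :=
  Quot.mk _ ⟨(z, c), hc⟩

lemma keq_refl (p : (G.unravel v₀).Pairs) : (G.unravel v₀).keq p p := by
  refine ⟨rfl, fun w hw z hz => ?_⟩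
  rw [(Walk.isPath_iff_eq_nil (p := w)).mp hw] at hz
  simp only [Walk.support_nil, List.mem_singleton] at hz
  subst hz
  exact p.2

lemma keq_symm {p q : (G.unravel v₀).Pairs} (h : (G.unravel v₀).keq p q) :
    (G.unravel v₀).keq q p := by
  obtain ⟨hc, hpaths⟩ := h
  refine ⟨hc.symm, fun w hw z hz => ?_⟩
  rw [← hc]
  exact hpaths w.reverse hw.reverse z (by rw [Walk.support_reverse]; simpa using hz)

lemma keq_trans {p q r : (G.unravel v₀).Pairs}
    (h1 : (G.unravel v₀).keq p q) (h2 : (G.unravel v₀).keq q r) :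
    (G.unravel v₀).keq p r := by
  obtain ⟨hc1, hpaths1⟩ := h1
  obtain ⟨hc2, hpaths2⟩ := h2
  refine ⟨hc1.trans hc2, fun w hw z hz => ?_⟩
  have hweq : w = ((canonPath p.1.1 q.1.1).append (canonPath q.1.1 r.1.1)).bypass :=
    path_unique w _ hw (Walk.bypass_isPath _)
  subst hweq
  have hz' := Walk.support_bypass_subset _ hz
  replace hz' := (Walk.mem_support_append_iff _ _).mp hz'
  rcases hz' with hz' | hz'
  · exact hpaths1 _ (canonPath_isPath _ _) z hz'
  · rw [hc1]
    exact hpaths2 _ (canonPath_isPath _ _) z hz'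

lemma keq_equivalence : Equivalence ((G.unravel v₀).keq) :=
  ⟨keq_refl, keq_symm, keq_trans⟩

lemma mkT_eq_iff {p q : (G.unravel v₀).Pairs} :
    Quot.mk (G.unravel v₀).keq p = Quot.mk (G.unravel v₀).keq q ↔
      (G.unravel v₀).keq p q := by
  rw [Quot.eq]
  exact (keq_equivalence).eqvGen_iff

/-- The constant of a class. -/
def cstT : Quot (G.unravel v₀).keq → K :=
  Quot.lift (fun p => p.1.2) (fun _ _ h => h.1)

@[simp] lemma cstT_mkT (z : TNode G v₀) (c : K) (hc : c ∈ G.consts z.1) :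
    cstT (mkT z c hc) = c := rfl

lemma mkT_congr {z z' : TNode G v₀} (h : z = z') (c : K) (hc : c ∈ G.consts z.1)
    (hc' : c ∈ G.consts z'.1) : mkT z c hc = mkT z' c hc' := by
  subst h; rfl

lemma mkT_congr_c {u : TNode G v₀} {c c' : K} (h : c = c') (hc : c ∈ G.consts u.1)
    (hc' : c' ∈ G.consts u.1) : mkT u c hc = mkT u c' hc' := by subst h; rfl

/-- Single-edge step of class equality. -/
lemma mkT_eq_of_adj {z z' : TNode G v₀} (h : (UG G v₀).Adj z z') {c : K}
    (hz : c ∈ G.consts z.1) (hz' : c ∈ G.consts z'.1) :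
    mkT z c hz = mkT z' c hz' := by
  apply Quot.sound
  refine ⟨rfl, fun w hw x hx => ?_⟩
  have hedge : (Walk.cons h (Walk.nil : (UG G v₀).Walk z' z')).IsPath := by
    rw [Walk.cons_isPath_iff]
    refine ⟨Walk.IsPath.nil, ?_⟩
    simp only [Walk.support_nil, List.mem_singleton]
    exact h.ne
  have hweq : w = Walk.cons h Walk.nil := path_unique w _ hw hedge
  subst hweq
  simp only [Walk.support_cons, Walk.support_nil, List.mem_cons, List.mem_singleton,
    List.not_mem_nil, or_false] at hx
  rcases List.mem_cons.mp hx with rfl | hx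
  · exact hz
  · obtain rfl : x = z' := List.mem_singleton.mp hx
    exact hz'

/-- Class equality along a carried walk in the base graph (going down the tree). -/
lemma mkT_eq_of_Gwalk : ∀ {b x : V} (ω : G.graph.Walk b x) (w0 : G.graph.Walk v₀ b)
    {c : K} (hcar : ∀ z ∈ ω.support, c ∈ G.consts z) (hc : c ∈ G.consts b)
    (hc' : c ∈ G.consts x),
    mkT (⟨b, w0⟩ : TNode G v₀) c hc = mkT ⟨x, w0.append ω⟩ c hc' := by
  intro b x ω
  induction ω with
  | nil =>
    intro w0 c hcar hc hc'
    exact mkT_congr (by rw [Walk.append_nil]) c hc hc'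
  | @cons b m x h ω' ih =>
    intro w0 c hcar hc hc'
    have hm : c ∈ G.consts m := hcar m (by simp [Walk.support_cons])
    have step : mkT (⟨b, w0⟩ : TNode G v₀) c hc = mkT ⟨m, w0.concat h⟩ c hm := by
      apply mkT_eq_of_adj
      exact Or.inl ⟨h, rfl⟩
    rw [step]
    have := ih (w0.concat h) (fun z hz => hcar z (by simp [Walk.support_cons, hz])) hm hc'
    rw [this]
    exact mkT_congr (by rw [Walk.concat_append]) c _ hc'

/-- Class equality gives carrying along any path, in particular the canonical one. -/
lemma carries_of_mkT_eq {z w : TNode G v₀} {c : K} {hz : c ∈ G.consts z.1}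
    {hw : c ∈ G.consts w.1} (h : mkT z c hz = mkT w c hw)
    (P : (UG G v₀).Walk z w) (hP : P.IsPath) :
    ∀ x ∈ P.support, c ∈ G.consts x.1 := by
  have hk := mkT_eq_iff.mp h
  exact fun x hx => hk.2 P hP x hx

/-- The projection homomorphism from the unraveling to the base graph. -/
def projHom : UG G v₀ →g G.graph where
  toFun := Sigma.fst
  map_rel' := by
    rintro s t (⟨h, _⟩ | ⟨h, _⟩)
    · exact h
    · exact h.symm

/-- Transport of atomic facts along carried walks, using compatibility. -/
lemma rel_propagate : ∀ {x y : V} (ω : G.graph.Walk x y) {n : ℕ} (R : L.Relations n)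
    (cs : Fin n → K), (∀ i, ∀ z ∈ ω.support, cs i ∈ G.consts z) →
    G.rel x R cs → G.rel y R cs := by
  intro x y ω
  induction ω with
  | nil => exact fun R cs _ h => h
  | @cons x m y ha ω' ih =>
    intro n R cs hcar h
    refine ih R cs (fun i z hz => hcar i z (by simp [Walk.support_cons, hz])) ?_
    refine (G.compat x m ha R cs (fun i => ⟨?_, ?_⟩)).mp h
    · exact hcar i x (by simp [Walk.support_cons])
    · exact hcar i m (by simp [Walk.support_cons, Walk.start_mem_support])

/-- **Key lemma**: relations of `𝔄(T)` on the classes of a single node are exactly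
the atomic facts of that node. -/
lemma AT_relMap_iff {u : TNode G v₀} {n : ℕ} (R : L.Relations n) (d : Fin n → K)
    (hd : ∀ i, d i ∈ G.consts u.1) [L.IsRelational] :
    (Tabloid.AT (G.unravel v₀)).RelMap R (fun i => mkT u (d i) (hd i)) ↔
      G.rel u.1 R d := by
  constructor
  · rintro ⟨w, c', h', hcls, hrel⟩
    have hc'd : ∀ i, c' i = d i := by
      intro i
      have := congrArg cstT (hcls i)
      exact this
    have hc'd' : c' = d := funext hc'd
    subst hc'd'
    have hcar : ∀ i, ∀ z ∈ (canonPath w u).support, c' i ∈ G.consts z.1 := by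
      intro i
      exact carries_of_mkT_eq (hcls i) (canonPath w u) (canonPath_isPath w u)
    have hcarG : ∀ i, ∀ z ∈ ((canonPath w u).map (projHom)).support, c' i ∈ G.consts z := by
      intro i z hz
      rw [Walk.support_map] at hz
      obtain ⟨z', hz', rfl⟩ := List.mem_map.mp hz
      exact hcar i z' hz'
    exact rel_propagate ((canonPath w u).map projHom) R c' hcarG hrel
  · intro h
    exact ⟨u, d, hd, fun i => rfl, h⟩

/-! ### Parities of walks in the base graph -/

variable [Fintype V]

/-- Indicator function of an edge. -/
def chi (e : Sym2 V) : Sym2 V → ZMod 2 := fun e' => if e' = e then 1 else 0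

/-- The parity vector of a walk. -/
def par {x y : V} (ω : G.graph.Walk x y) : Sym2 V → ZMod 2 :=
  (ω.edges.map chi).sum

@[simp] lemma par_nil {x : V} : par (G := G) (Walk.nil : G.graph.Walk x x) = 0 := rfl

lemma par_cons {x m y : V} (h : G.graph.Adj x m) (ω : G.graph.Walk m y) :
    par (Walk.cons h ω) = chi s(x, m) + par ω := by
  simp [par, Walk.edges_cons]

lemma par_append {x y z : V} (ω : G.graph.Walk x y) (ω' : G.graph.Walk y z) :
    par (ω.append ω') = par ω + par ω' := by
  simp [par, Walk.edges_append]

lemma par_reverse {x y : V} (ω : G.graph.Walk x y) : par ω.reverse = par ω := by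
  simp only [par, Walk.edges_reverse, List.map_reverse]
  exact List.sum_reverse _

lemma mem_edges_of_par_ne_zero : ∀ {x y : V} {ω : G.graph.Walk x y} {e : Sym2 V},
    par ω e ≠ 0 → e ∈ ω.edges := by
  intro x y ω
  induction ω with
  | nil =>
    intro e h
    exact absurd rfl h
  | @cons x m y ha ω' ih =>
    intro e h
    rw [par_cons] at h
    simp only [Pi.add_apply] at h
    rw [Walk.edges_cons]
    by_cases he : e = s(x, m)
    · exact List.mem_cons.mpr (Or.inl he)
    · refine List.mem_cons.mpr (Or.inr (ih ?_))
      intro h0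
      apply h
      rw [h0, add_zero]
      simp [chi, he]

/-- The degree of a parity vector at a vertex. -/
def deg (f : Sym2 V → ZMod 2) (x : V) : ZMod 2 :=
  ∑ e : Sym2 V, if x ∈ e then f e else 0

lemma deg_add (f g : Sym2 V → ZMod 2) (x : V) : deg (f + g) x = deg f x + deg g x := by
  rw [deg, deg, deg, ← Finset.sum_add_distrib]
  refine Finset.sum_congr rfl fun e _ => ?_
  by_cases h : x ∈ e <;> simp [h]

lemma deg_chi {a b : V} (hab : a ≠ b) (x : V) :
    deg (chi s(a, b)) x = (if x = a then 1 else 0) + (if x = b then 1 else 0) := by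
  rw [deg]
  have : ∀ e : Sym2 V, (if x ∈ e then chi s(a,b) e else 0) =
      (if e = s(a,b) then (if x ∈ e then (1 : ZMod 2) else 0) else 0) := by
    intro e
    by_cases h : e = s(a, b) <;> by_cases h' : x ∈ e <;> simp [chi, h, h']
  rw [Finset.sum_congr rfl (fun e _ => this e), Finset.sum_ite_eq' Finset.univ]
  simp only [Finset.mem_univ, if_true]
  by_cases hxa : x = a <;> by_cases hxb : x = b
  · exact absurd (hxa ▸ hxb ▸ rfl) hab
  · simp [Sym2.mem_iff, hxa, hxb, hab]
  · simp [Sym2.mem_iff, hxa, hxb, Ne.symm hab]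
  · simp [Sym2.mem_iff, hxa, hxb]

lemma deg_par {x y : V} (ω : G.graph.Walk x y) (z : V) :
    deg (par ω) z = (if z = x then 1 else 0) + (if z = y then 1 else 0) := by
  induction ω with
  | nil =>
    rename_i x'
    have h0 : deg (0 : Sym2 V → ZMod 2) z = 0 := by simp [deg]
    rw [par_nil, h0]
    by_cases h : z = x'
    · subst h; rw [if_pos rfl]; decide
    · simp [h]
  | @cons x m y ha ω' ih =>
    rw [par_cons, deg_add, deg_chi ha.ne, ih]
    have : ∀ a b c : ZMod 2, a + b + (b + c) = a + c := by decide
    exact this _ _ _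

/-- Extraction of a walk from an edge set with odd degrees exactly at two vertices. -/
lemma extract_walk : ∀ (m : ℕ) (F : Finset (Sym2 V)), F.card ≤ m →
    (∀ e ∈ F, e ∈ G.graph.edgeSet) → ∀ a b : V, a ≠ b →
    (∀ x : V, (∑ e ∈ F, if x ∈ e then (1 : ZMod 2) else 0) =
      (if x = a then 1 else 0) + (if x = b then 1 else 0)) →
    ∃ ω : G.graph.Walk a b, ∀ e ∈ ω.edges, e ∈ F := by
  intro m
  induction m with
  | zero =>
    intro F hcard _ a b hab hdeg
    exfalso
    have hF : F = ∅ := Finset.card_eq_zero.mp (Nat.le_zero.mp hcard)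
    have := hdeg a
    rw [hF] at this
    simp only [Finset.sum_empty, if_pos rfl, if_neg hab, add_zero] at this
    exact one_ne_zero this.symm
  | succ m ih =>
    intro F hcard hedge a b hab hdeg
    have ha1 : (∑ e ∈ F, if a ∈ e then (1 : ZMod 2) else 0) = 1 := by
      rw [hdeg a]; simp [hab]
    obtain ⟨e, heF, hae⟩ : ∃ e ∈ F, a ∈ e := by
      by_contra hc
      push_neg at hc
      rw [Finset.sum_eq_zero (fun e he => by simp [hc e he])] at ha1
      exact one_ne_zero ha1.symm
    obtain ⟨z, rfl⟩ : ∃ z, e = s(a, z) := Sym2.mem_iff_exists.mp hae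
    have haz : G.graph.Adj a z := (SimpleGraph.mem_edgeSet G.graph).mp (hedge _ heF)
    have hza : z ≠ a := haz.ne'
    by_cases hzb : z = b
    · subst hzb
      refine ⟨Walk.cons haz Walk.nil, ?_⟩
      intro e he
      simp only [Walk.edges_cons, Walk.edges_nil, List.mem_singleton] at he
      rw [he]
      exact heF
    · set F' := F.erase s(a, z) with hF'
      have hdeg' : ∀ x : V, (∑ e ∈ F', if x ∈ e then (1 : ZMod 2) else 0) =
          (if x = z then 1 else 0) + (if x = b then 1 else 0) := by
        intro x
        have h1 : (∑ e ∈ F', if x ∈ e then (1 : ZMod 2) else 0) +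
            (if x ∈ s(a, z) then (1 : ZMod 2) else 0) =
            (if x = a then 1 else 0) + (if x = b then 1 else 0) := by
          rw [Finset.sum_erase_add F _ heF]
          exact hdeg x
        have move : ∀ s t u : ZMod 2, s + t = u → s = u + t := by decide
        have h2 := move _ _ _ h1
        rw [h2]
        by_cases hxa : x = a
        · subst hxa
          simp [Sym2.mem_iff, hza, Ne.symm hza, hab]
          decide
        · by_cases hxz : x = z
          · subst hxz
            simp [Sym2.mem_iff, hxa, hzb]
          · by_cases hxb : x = b
            · subst hxb
              simp [Sym2.mem_iff, hxa, Ne.symm hzb]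
            · simp [Sym2.mem_iff, hxa, hxz, hxb]
      have hcard' : F'.card ≤ m := by
        rw [hF', Finset.card_erase_of_mem heF]
        omega
      obtain ⟨ω', hω'⟩ := ih F' hcard' (fun e he => hedge e (Finset.mem_of_mem_erase he))
        z b hzb hdeg'
      refine ⟨Walk.cons haz ω', ?_⟩
      intro e he
      rw [Walk.edges_cons] at he
      rcases List.mem_cons.mp he with rfl | he'
      · exact heF
      · exact Finset.mem_of_mem_erase (hω' e he')

/-- Every vertex on a non-trivial walk lies on one of its edges. -/
lemma mem_edge_of_mem_support {α : Type*} {Gr : SimpleGraph α} :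
    ∀ {x y : α} (ω : Gr.Walk x y), x ≠ y → ∀ z ∈ ω.support, ∃ e ∈ ω.edges, z ∈ e := by
  suffices H : ∀ {x y : α} (ω : Gr.Walk x y), ∀ z ∈ ω.support,
      (∃ e ∈ ω.edges, z ∈ e) ∨ ω.length = 0 by
    intro x y ω hxy z hz
    rcases H ω z hz with h | h
    · exact h
    · exact absurd (Walk.eq_of_length_eq_zero h) hxy
  intro x y ω
  induction ω with
  | nil =>
    intro z _
    exact Or.inr rfl
  | @cons x m y ha ω' ih =>
    intro z hz
    left
    rw [Walk.support_cons] at hz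
    rcases List.mem_cons.mp hz with rfl | hz'
    · exact ⟨s(z, m), by simp [Walk.edges_cons], by simp⟩
    · rcases ih z hz' with ⟨e, he, hze⟩ | hlen
      · exact ⟨e, by simp [Walk.edges_cons, he], hze⟩
      · have : z = m := by
          cases ω' with
          | nil => simpa using hz'
          | cons h w => simp at hlen
        subst this
        exact ⟨s(x, z), by simp [Walk.edges_cons], by simp⟩

/-! ### The cover pairs and their equivalence -/

/-- Pairs for the finite companion: cover vertices with constants, over reachable bases. -/
def CPair (G : Tabloid L K V) (v₀ : V) [Fintype V] : Type _ :=
  {q : ((V × (Sym2 V → ZMod 2)) × K) //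
    q.2 ∈ G.consts q.1.1 ∧ G.graph.Reachable v₀ q.1.1}

/-- Walk-based equivalence on cover pairs. -/
def weq (p q : CPair G v₀) : Prop :=
  p.1.2 = q.1.2 ∧ ∃ ω : G.graph.Walk p.1.1.1 q.1.1.1,
    (∀ z ∈ ω.support, p.1.2 ∈ G.consts z) ∧ q.1.1.2 = p.1.1.2 + par ω

lemma add_par_cancel (h p : Sym2 V → ZMod 2) : h + p + p = h := by
  funext e
  have : ∀ a b : ZMod 2, a + b + b = a := by decide
  simpa using this (h e) (p e)

lemma weq_refl (p : CPair G v₀) : weq p p := by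
  refine ⟨rfl, Walk.nil, ?_, ?_⟩
  · intro z hz
    simp only [Walk.support_nil, List.mem_singleton] at hz
    subst hz
    exact p.2.1
  · rw [par_nil, add_zero]

lemma weq_symm {p q : CPair G v₀} (h : weq p q) : weq q p := by
  obtain ⟨hc, ω, hcar, hpar⟩ := h
  refine ⟨hc.symm, ω.reverse, ?_, ?_⟩
  · intro z hz
    rw [← hc]
    exact hcar z (by rw [Walk.support_reverse] at hz; simpa using hz)
  · rw [par_reverse, hpar, add_par_cancel]

lemma weq_trans {p q r : CPair G v₀} (h1 : weq p q) (h2 : weq q r) : weq p r := by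
  obtain ⟨hc1, ω1, hcar1, hpar1⟩ := h1
  obtain ⟨hc2, ω2, hcar2, hpar2⟩ := h2
  refine ⟨hc1.trans hc2, ω1.append ω2, ?_, ?_⟩
  · intro z hz
    rw [Walk.mem_support_append_iff] at hz
    rcases hz with hz | hz
    · exact hcar1 z hz
    · rw [hc1]; exact hcar2 z hz
  · rw [par_append, hpar2, hpar1, add_assoc]

lemma weq_equivalence : Equivalence (weq (G := G) (v₀ := v₀)) :=
  ⟨weq_refl, weq_symm, weq_trans⟩

/-- Constructor of elements of the finite companion. -/
def mkN (x : V) (hx : Sym2 V → ZMod 2) (c : K) (hc : c ∈ G.consts x)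
    (hr : G.graph.Reachable v₀ x) : Quot (weq (G := G) (v₀ := v₀)) :=
  Quot.mk _ ⟨((x, hx), c), hc, hr⟩

lemma mkN_eq_iff {x y : V} {hx hy : Sym2 V → ZMod 2} {c c' : K} {hc hc' hr hr'} :
    mkN (G := G) (v₀ := v₀) x hx c hc hr = mkN y hy c' hc' hr' ↔
      weq (⟨((x, hx), c), hc, hr⟩ : CPair G v₀) ⟨((y, hy), c'), hc', hr'⟩ := by
  rw [mkN, mkN]
  exact Quot.eq.trans weq_equivalence.eqvGen_iff

/-- The constant of an element of the companion. -/
def cstN : Quot (weq (G := G) (v₀ := v₀)) → K :=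
  Quot.lift (fun p => p.1.2) (fun _ _ h => h.1)

@[simp] lemma cstN_mkN {x hx c hc hr} : cstN (mkN (G := G) (v₀ := v₀) x hx c hc hr) = c := rfl

/-- The structure on the finite companion. -/
def SNstr (G : Tabloid L K V) (v₀ : V) [Fintype V] [L.IsRelational] :
    L.Structure (Quot (weq (G := G) (v₀ := v₀))) where
  funMap := fun f _ => isEmptyElim f
  RelMap := fun {n} R b => ∃ (x : V) (hx : Sym2 V → ZMod 2) (cs : Fin n → K)
    (hc : ∀ i, cs i ∈ G.consts x) (hr : G.graph.Reachable v₀ x),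
      (∀ i, mkN x hx (cs i) (hc i) hr = b i) ∧ G.rel x R cs

/-- Transfer of atomic facts between two bases linked constant-wise by equal-parity
carried walks: the heart of the coherence of the companion. -/
lemma rel_transfer {n : ℕ} (R : L.Relations n) (cs : Fin n → K) {x y : V}
    (hx hy : Sym2 V → ZMod 2)
    (hrx : G.graph.Reachable v₀ x) (hry : G.graph.Reachable v₀ y)
    (hwalks : ∀ i, ∃ ω : G.graph.Walk x y,
      (∀ z ∈ ω.support, cs i ∈ G.consts z) ∧ hy = hx + par ω)
    (hrel : G.rel x R cs) : G.rel y R cs := by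
  by_cases hxy : x = y
  · subst hxy; exact hrel
  rcases isEmpty_or_nonempty (Fin n) with hemp | hne
  · obtain ⟨ω⟩ : G.graph.Reachable x y := hrx.symm.trans hry
    exact rel_propagate ω R cs (fun i => isEmptyElim i) hrel
  · obtain ⟨i₀⟩ := hne
    obtain ⟨ω₀, hcar₀, hpar₀⟩ := hwalks i₀
    set sbar := par ω₀ with hsbar
    have hpareq : ∀ i, ∃ ω : G.graph.Walk x y,
        (∀ z ∈ ω.support, cs i ∈ G.consts z) ∧ par ω = sbar := by
      intro i
      obtain ⟨ω, hcar, hpar⟩ := hwalks i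
      exact ⟨ω, hcar, add_left_cancel (hpar.symm.trans hpar₀)⟩
    set F : Finset (Sym2 V) := Finset.univ.filter (fun e => sbar e ≠ 0) with hF
    have hmemF : ∀ i, ∀ e ∈ F, ∃ ω : G.graph.Walk x y,
        (∀ z ∈ ω.support, cs i ∈ G.consts z) ∧ e ∈ ω.edges := by
      intro i e he
      obtain ⟨ω, hcar, hpar⟩ := hpareq i
      refine ⟨ω, hcar, mem_edges_of_par_ne_zero ?_⟩
      rw [hpar]
      exact (Finset.mem_filter.mp he).2
    have hedgeF : ∀ e ∈ F, e ∈ G.graph.edgeSet := by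
      intro e he
      obtain ⟨ω, _, hmem⟩ := hmemF i₀ e he
      exact ω.edges_subset_edgeSet hmem
    have hdegF : ∀ x' : V, (∑ e ∈ F, if x' ∈ e then (1 : ZMod 2) else 0) =
        (if x' = x then 1 else 0) + (if x' = y then 1 else 0) := by
      intro x'
      have h1 : ∀ e ∈ F, sbar e = 1 := by
        intro e he
        have h2 := (Finset.mem_filter.mp he).2
        revert h2
        generalize sbar e = a
        revert a
        decide
      have hdg : (∑ e ∈ F, if x' ∈ e then (1 : ZMod 2) else 0) = deg sbar x' := by
        rw [deg]
        calc (∑ e ∈ F, if x' ∈ e then (1 : ZMod 2) else 0)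
            = ∑ e ∈ F, (if x' ∈ e then sbar e else 0) :=
              Finset.sum_congr rfl (fun e he => by
                by_cases hx' : x' ∈ e <;> simp [hx', h1 e he])
          _ = ∑ e : Sym2 V, (if x' ∈ e then sbar e else 0) :=
              Finset.sum_subset (Finset.subset_univ F) (fun e _ henot => by
                have h0 : sbar e = 0 := by
                  by_contra hcon
                  exact henot (Finset.mem_filter.mpr ⟨Finset.mem_univ e, hcon⟩)
                simp [h0])
      rw [hdg, hsbar, deg_par]
    obtain ⟨ωj, hωj⟩ := extract_walk F.card F le_rfl hedgeF x y hxy hdegF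
    have hcarj : ∀ i, ∀ z ∈ ωj.support, cs i ∈ G.consts z := by
      intro i z hz
      obtain ⟨e, heωj, hze⟩ := mem_edge_of_mem_support ωj hxy z hz
      obtain ⟨t, rfl⟩ := Sym2.mem_iff_exists.mp hze
      obtain ⟨ω, hcar, hmem⟩ := hmemF i _ (hωj _ heωj)
      exact hcar z (ω.fst_mem_support_of_mem_edges hmem)
    exact rel_propagate ωj R cs hcarj hrel

/-! ### The partial isomorphisms -/

variable [L.IsRelational]

lemma SN_relMap_iff {x : V} (hx : Sym2 V → ZMod 2) (hr : G.graph.Reachable v₀ x)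
    {n : ℕ} (R : L.Relations n) (d : Fin n → K) (hd : ∀ i, d i ∈ G.consts x) :
    (SNstr G v₀).RelMap R (fun i => mkN x hx (d i) (hd i) hr) ↔ G.rel x R d := by
  constructor
  · rintro ⟨x', hx', cs, hc, hr', hcls, hrel⟩
    have hcd : cs = d := funext fun i => by
      have := congrArg cstN (hcls i)
      simpa using this
    subst hcd
    refine rel_transfer R cs hx' hx hr' hr ?_ hrel
    intro i
    obtain ⟨-, ω, hcar, hpar⟩ := mkN_eq_iff.mp (hcls i)
    exact ⟨ω, hcar, hpar⟩
  · intro h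
    exact ⟨x, hx, d, hd, hr, fun i => rfl, h⟩

/-- A default value function. -/
def junkN : Quot (G.unravel v₀).keq → Quot (weq (G := G) (v₀ := v₀)) := fun m =>
  mkN (Quot.exists_rep m).choose.1.1.1 0 (Quot.exists_rep m).choose.1.2
    (Quot.exists_rep m).choose.2 ⟨(Quot.exists_rep m).choose.1.1.2⟩

lemma mem_range_mkT {u : TNode G v₀} {n₀ : ℕ} {cs₀ : Fin n₀ → K}
    {hc₀ : ∀ i, cs₀ i ∈ G.consts u.1} {m : Quot (G.unravel v₀).keq}
    (hm : m ∈ Set.range (fun i => mkT u (cs₀ i) (hc₀ i))) :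
    ∃ hc : cstT m ∈ G.consts u.1, m = mkT u (cstT m) hc := by
  obtain ⟨i, rfl⟩ := hm
  exact ⟨hc₀ i, rfl⟩

/-- The partial isomorphism at a node `u` with a guard `R₀ cs₀` and anchor `hh`. -/
def guardIso (u : TNode G v₀) {n₀ : ℕ} (R₀ : L.Relations n₀) (cs₀ : Fin n₀ → K)
    (hc₀ : ∀ i, cs₀ i ∈ G.consts u.1) (hrel₀ : G.rel u.1 R₀ cs₀)
    (hh : Sym2 V → ZMod 2) :
    PartialIso (Tabloid.AT (G.unravel v₀)) (SNstr G v₀) where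
  dom := Set.range (fun i => mkT u (cs₀ i) (hc₀ i))
  finite_dom := Set.finite_range _
  toFun := fun m =>
    if h : cstT m ∈ G.consts u.1 then mkN u.1 hh (cstT m) h ⟨u.2⟩ else junkN m
  injOn := by
    intro m hm m' hm' hval
    obtain ⟨hc, heq⟩ := mem_range_mkT hm
    obtain ⟨hc', heq'⟩ := mem_range_mkT hm'
    simp only at hval
    rw [dif_pos hc, dif_pos hc'] at hval
    have hcc : cstT m = cstT m' := by
      have := congrArg cstN hval
      exact this
    have hmm : mkT u (cstT m) hc = mkT u (cstT m') hc' := mkT_congr_c hcc hc hc'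
    rw [heq, heq', ← hmm]
  rel_iff := by
    intro n R a ha
    have hd : ∀ i, cstT (a i) ∈ G.consts u.1 := fun i => (mem_range_mkT (ha i)).choose
    have heq : ∀ i, a i = mkT u (cstT (a i)) (hd i) :=
      fun i => (mem_range_mkT (ha i)).choose_spec
    have ha' : a = fun i => mkT u (cstT (a i)) (hd i) := funext heq
    rw [ha']
    rw [AT_relMap_iff R (fun i => cstT (a i)) hd]
    have htf : (fun i => if h : cstT (mkT u (cstT (a i)) (hd i)) ∈ G.consts u.1 then
        mkN u.1 hh (cstT (mkT u (cstT (a i)) (hd i))) h ⟨u.2⟩ else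
          junkN (mkT u (cstT (a i)) (hd i))) =
        fun i => mkN u.1 hh (cstT (a i)) (hd i) ⟨u.2⟩ := by
      funext i
      exact dif_pos (hd i)
    rw [htf]
    exact (SN_relMap_iff hh ⟨u.2⟩ R (fun i => cstT (a i)) hd).symm

/-- The empty partial isomorphism. -/
def emptyIso : PartialIso (Tabloid.AT (G.unravel v₀)) (SNstr G v₀) where
  dom := ∅
  finite_dom := Set.finite_empty
  toFun := junkN
  injOn := fun x hx => absurd hx (Set.notMem_empty x)
  rel_iff := by
    intro n R a ha
    rcases isEmpty_or_nonempty (Fin n) with hemp | hne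
    · constructor
      · rintro ⟨w, cs, h, _, hrel⟩
        exact ⟨w.1, 0, cs, h, ⟨w.2⟩, fun i => hemp.elim i, hrel⟩
      · rintro ⟨x, hx, cs, hc, hr, _, hrel⟩
        obtain ⟨wx⟩ := hr
        exact ⟨⟨x, wx⟩, cs, hc, fun i => hemp.elim i, hrel⟩
    · exact absurd (ha hne.some) (Set.notMem_empty _)

/-- The family of partial isomorphisms. -/
def ZZ (G : Tabloid L K V) (v₀ : V) [Fintype V] [L.IsRelational] :
    Set (PartialIso (Tabloid.AT (G.unravel v₀)) (SNstr G v₀)) :=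
  {α | α = emptyIso ∨ ∃ (u : TNode G v₀) (n₀ : ℕ) (R₀ : L.Relations n₀)
    (cs₀ : Fin n₀ → K) (hc₀ : ∀ i, cs₀ i ∈ G.consts u.1)
    (hrel₀ : G.rel u.1 R₀ cs₀) (hh : Sym2 V → ZMod 2),
      α = guardIso u R₀ cs₀ hc₀ hrel₀ hh}

lemma guardIso_dom {u : TNode G v₀} {n₀ : ℕ} {R₀ : L.Relations n₀} {cs₀ : Fin n₀ → K}
    {hc₀ : ∀ i, cs₀ i ∈ G.consts u.1} {hrel₀ : G.rel u.1 R₀ cs₀} {hh : Sym2 V → ZMod 2} :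
    (guardIso u R₀ cs₀ hc₀ hrel₀ hh).dom = Set.range (fun i => mkT u (cs₀ i) (hc₀ i)) := rfl

lemma guardIso_toFun {u : TNode G v₀} {n₀ : ℕ} {R₀ : L.Relations n₀} {cs₀ : Fin n₀ → K}
    {hc₀ : ∀ i, cs₀ i ∈ G.consts u.1} {hrel₀ : G.rel u.1 R₀ cs₀} {hh : Sym2 V → ZMod 2}
    {m : Quot (G.unravel v₀).keq} (h : cstT m ∈ G.consts u.1) :
    (guardIso u R₀ cs₀ hc₀ hrel₀ hh).toFun m = mkN u.1 hh (cstT m) h ⟨u.2⟩ := by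
  show dite _ _ _ = _
  rw [dif_pos h]

/-- The forth property. -/
lemma forth_holds : ∀ α ∈ ZZ G v₀, ∀ B₀ : Set (Quot (G.unravel v₀).keq),
    IsGuardedSet (Tabloid.AT (G.unravel v₀)) B₀ →
    ∃ γ ∈ ZZ G v₀, B₀ ⊆ γ.dom ∧ ∀ x ∈ α.dom ∩ γ.dom, α.toFun x = γ.toFun x := by
  rintro α hα B₀ ⟨-, nB, RB, aB, hRel, hsub⟩
  obtain ⟨w, cs, hcw, hcls, hrelw⟩ := hRel
  have haB : ∀ i, aB i = mkT w (cs i) (hcw i) := fun i => (hcls i).symm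
  rcases hα with rfl | ⟨u, n₀, R₀, cs₀, hc₀, hrel₀, hh, rfl⟩
  · refine ⟨guardIso w RB cs hcw hrelw 0, Or.inr ⟨w, _, _, _, _, _, _, rfl⟩, ?_, ?_⟩
    · intro x hx
      obtain ⟨i, rfl⟩ := hsub hx
      exact ⟨i, (haB i).symm⟩
    · rintro x ⟨hx, -⟩
      exact absurd hx (Set.notMem_empty x)
  · set P := canonPath u w with hP
    refine ⟨guardIso w RB cs hcw hrelw (hh + par (P.map (projHom))),
      Or.inr ⟨w, _, _, _, _, _, _, rfl⟩, ?_, ?_⟩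
    · intro x hx
      obtain ⟨i, rfl⟩ := hsub hx
      exact ⟨i, (haB i).symm⟩
    · rintro x ⟨hxu, hxw⟩
      obtain ⟨hcu, hequ⟩ := mem_range_mkT hxu
      obtain ⟨hcww, heqw⟩ := mem_range_mkT hxw
      refine (guardIso_toFun hcu).trans ((?_ : _ = _).trans (guardIso_toFun hcww).symm)
      apply mkN_eq_iff.mpr
      have hteq : mkT u (cstT x) hcu = mkT w (cstT x) hcww := hequ.symm.trans heqw
      have hcar := carries_of_mkT_eq hteq P (canonPath_isPath u w)
      refine ⟨rfl, P.map (projHom), ?_, rfl⟩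
      intro z hz
      have hz2 : z ∈ P.support.map projHom := by rw [← Walk.support_map]; exact hz
      obtain ⟨z', hz', rfl⟩ := List.mem_map.mp hz2
      exact hcar z' hz'

/-- Joint carried walks from per-constant equal-parity carried walks. -/
lemma joint_walk {x y : V} (hxy : x ≠ y) (sbar : Sym2 V → ZMod 2) (Pr : K → Prop)
    (hwalks : ∀ c, Pr c → ∃ ω : G.graph.Walk x y,
      (∀ z ∈ ω.support, c ∈ G.consts z) ∧ par ω = sbar)
    (hex : ∃ c₀, Pr c₀) :
    ∃ ω : G.graph.Walk x y, ∀ c, Pr c → ∀ z ∈ ω.support, c ∈ G.consts z := by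
  obtain ⟨c₀, hc₀⟩ := hex
  set F : Finset (Sym2 V) := Finset.univ.filter (fun e => sbar e ≠ 0) with hF
  have hmemF : ∀ c, Pr c → ∀ e ∈ F, ∃ ω : G.graph.Walk x y,
      (∀ z ∈ ω.support, c ∈ G.consts z) ∧ e ∈ ω.edges := by
    intro c hc e he
    obtain ⟨ω, hcar, hpar⟩ := hwalks c hc
    refine ⟨ω, hcar, mem_edges_of_par_ne_zero ?_⟩
    rw [hpar]
    exact (Finset.mem_filter.mp he).2
  have hedgeF : ∀ e ∈ F, e ∈ G.graph.edgeSet := by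
    intro e he
    obtain ⟨ω, _, hmem⟩ := hmemF c₀ hc₀ e he
    exact ω.edges_subset_edgeSet hmem
  have hdegF : ∀ x' : V, (∑ e ∈ F, if x' ∈ e then (1 : ZMod 2) else 0) =
      (if x' = x then 1 else 0) + (if x' = y then 1 else 0) := by
    intro x'
    have h1 : ∀ e ∈ F, sbar e = 1 := by
      intro e he
      have h2 := (Finset.mem_filter.mp he).2
      revert h2
      generalize sbar e = a
      revert a
      decide
    obtain ⟨ω₀, hcar₀, hpar₀⟩ := hwalks c₀ hc₀
    have hdg : (∑ e ∈ F, if x' ∈ e then (1 : ZMod 2) else 0) = deg sbar x' := by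
      rw [deg]
      calc (∑ e ∈ F, if x' ∈ e then (1 : ZMod 2) else 0)
          = ∑ e ∈ F, (if x' ∈ e then sbar e else 0) :=
            Finset.sum_congr rfl (fun e he => by
              by_cases hx' : x' ∈ e <;> simp [hx', h1 e he])
        _ = ∑ e : Sym2 V, (if x' ∈ e then sbar e else 0) :=
            Finset.sum_subset (Finset.subset_univ F) (fun e _ henot => by
              have h0 : sbar e = 0 := by
                by_contra hcon
                exact henot (Finset.mem_filter.mpr ⟨Finset.mem_univ e, hcon⟩)
              simp [h0])
    rw [hdg, ← hpar₀, deg_par]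
  obtain ⟨ωj, hωj⟩ := extract_walk F.card F le_rfl hedgeF x y hxy hdegF
  refine ⟨ωj, ?_⟩
  intro c hc z hz
  obtain ⟨e, heωj, hze⟩ := mem_edge_of_mem_support ωj hxy z hz
  obtain ⟨t, rfl⟩ := Sym2.mem_iff_exists.mp hze
  obtain ⟨ω, hcar, hmem⟩ := hmemF c hc _ (hωj _ heωj)
  exact hcar z (ω.fst_mem_support_of_mem_edges hmem)

lemma mkN_congr_c {x : V} {hx : Sym2 V → ZMod 2} {c c' : K} (h : c = c')
    {hc : c ∈ G.consts x} {hc' : c' ∈ G.consts x} {hr hr' : G.graph.Reachable v₀ x} :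
    mkN x hx c hc hr = mkN x hx c' hc' hr' := by subst h; rfl

/-- The back property. -/
lemma back_holds : ∀ α ∈ ZZ G v₀, ∀ B₁ : Set (Quot (weq (G := G) (v₀ := v₀))),
    IsGuardedSet (SNstr G v₀) B₁ →
    ∃ γ ∈ ZZ G v₀, B₁ ⊆ γ.rng ∧
      ∀ x ∈ α.dom, ∀ y ∈ γ.dom, α.toFun x = γ.toFun y → x = y := by
  rintro α hα B₁ ⟨-, nB, RB, b, hRel, hsub⟩
  obtain ⟨x₂, h₂, cs, hc, hr, hcls, hrelx⟩ := hRel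
  rcases hα with rfl | ⟨u, n₀, R₀, cs₀, hc₀, hrel₀, hh, rfl⟩
  · obtain ⟨wx⟩ := hr
    refine ⟨guardIso ⟨x₂, wx⟩ RB cs hc hrelx h₂,
      Or.inr ⟨_, _, _, _, _, _, _, rfl⟩, ?_, ?_⟩
    · intro yy hyy
      obtain ⟨i, hib⟩ := hsub hyy
      refine ⟨mkT ⟨x₂, wx⟩ (cs i) (hc i), ⟨i, rfl⟩, ?_⟩
      rw [guardIso_toFun (hc i), ← hib, ← hcls i]
      rfl
    · rintro x hx
      exact absurd hx (Set.notMem_empty x)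
  · set Hcol : K → Prop := fun c => ∃ (h1 : c ∈ G.consts u.1) (h2 : c ∈ G.consts x₂),
      mkN u.1 hh c h1 ⟨u.2⟩ = mkN x₂ h₂ c h2 hr with hHcol
    have hclaim : ∃ ω : G.graph.Walk u.1 x₂,
        ∀ c, Hcol c → ∀ z ∈ ω.support, c ∈ G.consts z := by
      by_cases hxeq : u.1 = x₂
      · refine ⟨(Walk.nil : G.graph.Walk u.1 u.1).copy rfl hxeq, ?_⟩
        intro c hcol z hz
        rw [Walk.support_copy] at hz
        simp only [Walk.support_nil, List.mem_singleton] at hz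
        subst hz
        exact hcol.choose
      · by_cases hex : ∃ c, Hcol c
        · refine joint_walk hxeq (hh + h₂) Hcol ?_ hex
          intro c hcol
          obtain ⟨h1, h2, heq⟩ := hcol
          obtain ⟨-, ω, hcar, hpar⟩ := mkN_eq_iff.mp heq
          refine ⟨ω, hcar, ?_⟩
          have hpar' : h₂ = hh + par ω := hpar
          rw [hpar']
          funext e
          have h3 : ∀ a b : ZMod 2, a = b + (b + a) := by decide
          simpa using h3 (par ω e) (hh e)
        · push_neg at hex
          obtain ⟨wx⟩ := hr
          exact ⟨u.2.reverse.append wx, fun c hcol => absurd hcol (hex c)⟩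
    obtain ⟨ω, hω⟩ := hclaim
    refine ⟨guardIso ⟨x₂, u.2.append ω⟩ RB cs hc hrelx h₂,
      Or.inr ⟨_, _, _, _, _, _, _, rfl⟩, ?_, ?_⟩
    · intro yy hyy
      obtain ⟨i, hib⟩ := hsub hyy
      refine ⟨mkT ⟨x₂, u.2.append ω⟩ (cs i) (hc i), ⟨i, rfl⟩, ?_⟩
      rw [guardIso_toFun (hc i), ← hib, ← hcls i]
      rfl
    · intro x hx y hy hval
      obtain ⟨hcu, hequ⟩ := mem_range_mkT hx
      obtain ⟨hcww, heqw⟩ := mem_range_mkT hy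
      rw [guardIso_toFun hcu, guardIso_toFun hcww] at hval
      have hcc : cstT x = cstT y := by
        have := congrArg cstN hval
        exact this
      have hcw2 : cstT x ∈ G.consts x₂ := by rw [hcc]; exact hcww
      have hcol : Hcol (cstT x) := by
        refine ⟨hcu, hcw2, ?_⟩
        exact hval.trans (mkN_congr_c hcc.symm)
      have hcar : ∀ z ∈ ω.support, cstT x ∈ G.consts z := hω _ hcol
      have hteq : mkT u (cstT x) hcu = mkT ⟨x₂, u.2.append ω⟩ (cstT x) hcw2 := by
        have h1 : mkT u (cstT x) hcu = mkT ⟨u.1, u.2⟩ (cstT x) hcu :=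
          mkT_congr (Sigma.eta u).symm _ _ _
        rw [h1]
        exact mkT_eq_of_Gwalk ω u.2 hcar hcu hcw2
      rw [hequ, heqw, hteq]
      exact mkT_congr_c hcc hcw2 hcww

/-- The guarded bisimulation between `𝔄(T)` and the companion structure. -/
def theBisim (G : Tabloid L K V) (v₀ : V) [Fintype V] [L.IsRelational] :
    GuardedBisim (Tabloid.AT (G.unravel v₀)) (SNstr G v₀) where
  Z := ZZ G v₀
  nonempty := ⟨emptyIso, Or.inl rfl⟩
  forth := forth_holds
  back := back_holds

lemma finite_N [Finite K] : Finite (Quot (weq (G := G) (v₀ := v₀))) := by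
  have : Finite (CPair G v₀) := by
    unfold CPair
    infer_instance
  exact Finite.of_surjective _ (Quot.mk_surjective)

/-! ### Transport along an equivalence -/

/-- Transport of a relational structure along an equivalence. -/
def transportStr {N₁ N₂ : Type*} [L.IsRelational] (SN : L.Structure N₁) (e : N₁ ≃ N₂) :
    L.Structure N₂ where
  funMap := fun f _ => isEmptyElim f
  RelMap := fun R b => SN.RelMap R (fun i => e.symm (b i))

/-- Transport of a partial isomorphism along an equivalence of codomains. -/
def transportIso {M₁ N₁ N₂ : Type*} [L.IsRelational] {SM : L.Structure M₁}
    {SN : L.Structure N₁} (e : N₁ ≃ N₂) (α : PartialIso SM SN) :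
    PartialIso SM (transportStr SN e) where
  dom := α.dom
  finite_dom := α.finite_dom
  toFun := fun m => e (α.toFun m)
  injOn := fun x hx y hy h => α.injOn hx hy (e.injective h)
  rel_iff := by
    intro n R a ha
    rw [α.rel_iff R a ha]
    show _ ↔ SN.RelMap R _
    have : (fun i => e.symm (e (α.toFun (a i)))) = fun i => α.toFun (a i) := by
      funext i
      exact e.symm_apply_apply _
    rw [this]

/-- Transport of a guarded bisimulation along an equivalence of codomains. -/
def transportBisim {M₁ N₁ N₂ : Type*} [L.IsRelational] {SM : L.Structure M₁}
    {SN : L.Structure N₁} (e : N₁ ≃ N₂) (B : GuardedBisim SM SN) :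
    GuardedBisim SM (transportStr SN e) where
  Z := (transportIso e) '' B.Z
  nonempty := ⟨transportIso e B.nonempty.choose, ⟨_, B.nonempty.choose_spec, rfl⟩⟩
  forth := by
    rintro α' ⟨α, hα, rfl⟩ B₀ hB₀
    obtain ⟨γ, hγ, hdom, hagr⟩ := B.forth α hα B₀ hB₀
    refine ⟨transportIso e γ, ⟨γ, hγ, rfl⟩, hdom, ?_⟩
    intro x hx
    show e _ = e _
    exact congrArg e (hagr x hx)
  back := by
    rintro α' ⟨α, hα, rfl⟩ B₁ hB₁
    obtain ⟨hne, n, R, b, hRel, hsub⟩ := hB₁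
    have hB₁' : IsGuardedSet SN (e.symm '' B₁) := by
      refine ⟨hne.image _, n, R, fun i => e.symm (b i), hRel, ?_⟩
      rintro y ⟨y', hy', rfl⟩
      obtain ⟨i, rfl⟩ := hsub hy'
      exact ⟨i, rfl⟩
    obtain ⟨γ, hγ, hrng, hinj⟩ := B.back α hα _ hB₁'
    refine ⟨transportIso e γ, ⟨γ, hγ, rfl⟩, ?_, ?_⟩
    · intro y hy
      obtain ⟨m, hm, hm'⟩ := hrng ⟨y, hy, rfl⟩
      refine ⟨m, hm, ?_⟩
      show e _ = y
      rw [hm']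
      exact e.apply_symm_apply y
    · intro x hx y hy hval
      exact hinj x hx y hy (e.injective hval)

end

end S12
/-- For a finite nonempty tabloid `G` over a finite relational signature
and finite set of constants, with `T` its undirected unraveling from any node, the structure
`𝔄(T)` is guarded bisimilar to some finite structure. -/
theorem unravel_gbisim_finite_structure {L : FirstOrder.Language} [L.IsRelational]
    [Finite (Σ n : ℕ, L.Relations n)] {K V : Type*} [Finite K] [Finite V] [Nonempty V]
    (G : Tabloid L K V) (v₀ : V) :
    ∃ (N : Type) (SN : L.Structure N), Finite N ∧
      Nonempty (GuardedBisim (G.unravel v₀).AT SN) := by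
  letI : Fintype V := Fintype.ofFinite V
  have hfin : Finite (Quot (S12.weq (G := G) (v₀ := v₀))) := S12.finite_N
  obtain ⟨n, ⟨e⟩⟩ := Finite.exists_equiv_fin (Quot (S12.weq (G := G) (v₀ := v₀)))
  exact ⟨Fin n, S12.transportStr (S12.SNstr G v₀) e, inferInstance,
    ⟨S12.transportBisim e (S12.theBisim G v₀)⟩⟩

end GFPaper
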